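/- Let ℓ ≥ 5 be an integer and let G be a graph such that every subgraph J of G with at least one vertex satisfies (ℓ−2)·e(J) < (ℓ−1)·v(J) (i.e. m(G) < (ℓ−1)/(ℓ−2)). Let (H₁,…,H_t) be a construction sequence of ℓ-cycles in G. Then there is at most one index 1 ≤ i ≤ t−1 with V(H_{i+1}) = V(H_i), i.e. at most one step of the sequence adds no new vertex (configuration (A_ℓ) appears at most once). -/

import Mathlib

/-- `C` is an `ℓ`-cycle of `G`, given as a subgraph of `G`. -/
def IsCycleSubgraph {V : Type*} (G : SimpleGraph V) (ℓ : ℕ) (C : G.Subgraph) : Prop :=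
  Nonempty (C.coe ≃g SimpleGraph.cycleGraph ℓ)

/-- `(H 1, …, H t)` is a construction sequence of `ℓ`-cycles in `G`: `H 1` is an
`ℓ`-cycle of `G` and each `H (i+1)` is obtained from `H i` by adding an `ℓ`-cycle `C`
of `G` with `C ⊄ H i` and `E(C) ∩ E(H i) ≠ ∅`. -/
def IsConstructionSeq {V : Type*} (G : SimpleGraph V) (ℓ t : ℕ)
    (H : ℕ → G.Subgraph) : Prop :=
  1 ≤ t ∧ IsCycleSubgraph G ℓ (H 1) ∧
    ∀ i, 1 ≤ i → i < t → ∃ C : G.Subgraph, IsCycleSubgraph G ℓ C ∧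
      ¬ C ≤ H i ∧ (C.edgeSet ∩ (H i).edgeSet).Nonempty ∧ H (i + 1) = H i ⊔ C

section Helpers

open Set
open scoped Fin.NatCast Fin.CommRing

variable {V : Type*} {G : SimpleGraph V} {ℓ : ℕ} {C A : G.Subgraph}

/-- A nonempty subset of `Fin n` closed under adding one is everything. -/
lemma fin_succ_closed_eq_univ {n : ℕ} [NeZero n] (O : Set (Fin n)) (h0 : O.Nonempty)
    (hsucc : ∀ x ∈ O, x + 1 ∈ O) : O = Set.univ := by
  obtain ⟨x₀, hx₀⟩ := h0
  have key : ∀ m : ℕ, x₀ + (m : Fin n) ∈ O := by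
    intro m
    induction m with
    | zero => simpa using hx₀
    | succ k ih =>
        have : ((k + 1 : ℕ) : Fin n) = (k : Fin n) + 1 := by push_cast; ring
        rw [this, ← add_assoc]
        exact hsucc _ ih
  ext y
  simp only [Set.mem_univ, iff_true]
  have := key (y - x₀).val
  rwa [Fin.cast_val_eq_self, show x₀ + (y - x₀) = y by ring] at this

/-- Structure of an `ℓ`-cycle subgraph: an injective cyclic enumeration of its
vertices realizing exactly its adjacencies. -/
lemma cycle_struct [NeZero ℓ] (hℓ : 5 ≤ ℓ) (hC : IsCycleSubgraph G ℓ C) :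
    ∃ ψ : Fin ℓ → V, Function.Injective ψ ∧ C.verts = Set.range ψ ∧
      (∀ x, C.Adj (ψ x) (ψ (x + 1))) ∧
      (∀ u v, C.Adj u v → ∃ x, (u = ψ x ∧ v = ψ (x + 1)) ∨ (v = ψ x ∧ u = ψ (x + 1))) := by
  obtain ⟨φ⟩ := hC
  have h1 : ((1 : Fin ℓ) : ℕ) = 1 := by rw [Fin.val_one']; exact Nat.mod_eq_of_lt (by omega)
  refine ⟨fun x => ((φ.symm x : C.verts) : V), ?_, ?_, ?_, ?_⟩
  · exact Subtype.val_injective.comp φ.symm.toEquiv.injective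
  · ext v
    constructor
    · intro hv
      exact ⟨φ ⟨v, hv⟩, by simp⟩
    · rintro ⟨x, rfl⟩
      exact (φ.symm x).2
  · intro x
    have hadj : (SimpleGraph.cycleGraph ℓ).Adj x (x + 1) := by
      rw [SimpleGraph.cycleGraph_adj']
      right
      rw [show x + 1 - x = 1 by ring, h1]
    have := φ.symm.map_adj_iff.mpr hadj
    exact this
  · intro u v huv
    have hu : u ∈ C.verts := C.edge_vert huv
    have hv : v ∈ C.verts := C.edge_vert huv.symm
    have hcoe : C.coe.Adj ⟨u, hu⟩ ⟨v, hv⟩ := huv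
    have hadj : (SimpleGraph.cycleGraph ℓ).Adj (φ ⟨u, hu⟩) (φ ⟨v, hv⟩) :=
      φ.map_adj_iff.mpr hcoe
    rw [SimpleGraph.cycleGraph_adj'] at hadj
    rcases hadj with h | h
    · refine ⟨φ ⟨v, hv⟩, Or.inr ⟨by simp, ?_⟩⟩
      have : φ ⟨u, hu⟩ - φ ⟨v, hv⟩ = 1 := by
        apply Fin.val_injective; rw [h, h1]
      have hx : φ ⟨u, hu⟩ = φ ⟨v, hv⟩ + 1 := by
        rw [← this]; ring
      rw [← hx]; simp
    · refine ⟨φ ⟨u, hu⟩, Or.inl ⟨by simp, ?_⟩⟩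
      have : φ ⟨v, hv⟩ - φ ⟨u, hu⟩ = 1 := by
        apply Fin.val_injective; rw [h, h1]
      have hx : φ ⟨v, hv⟩ = φ ⟨u, hu⟩ + 1 := by
        rw [← this]; ring
      rw [← hx]; simp

lemma cycle_verts_ncard (hℓ : 5 ≤ ℓ) (hC : IsCycleSubgraph G ℓ C) :
    C.verts.ncard = ℓ := by
  haveI : NeZero ℓ := ⟨by omega⟩
  obtain ⟨ψ, hinj, hrange, -, -⟩ := cycle_struct hℓ hC
  rw [hrange, ← Set.image_univ, Set.ncard_image_of_injective _ hinj, Set.ncard_univ,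
    Nat.card_eq_fintype_card, Fintype.card_fin]

lemma cycle_g_inj [NeZero ℓ] (hℓ : 5 ≤ ℓ) {ψ : Fin ℓ → V} (hinj : Function.Injective ψ) :
    Function.Injective (fun x : Fin ℓ => s(ψ x, ψ (x + 1))) := by
  have h1 : ((1 : Fin ℓ) : ℕ) = 1 := by rw [Fin.val_one']; exact Nat.mod_eq_of_lt (by omega)
  intro x y hxy
  simp only at hxy
  rw [Sym2.eq_iff] at hxy
  rcases hxy with ⟨h, -⟩ | ⟨h1', h2'⟩
  · exact hinj h
  · exfalso
    have hx : x = y + 1 := hinj h1'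
    have hy : x + 1 = y := hinj h2'
    have hxx : x = x + 1 + 1 := by rw [hy, ← hx]
    have h0 : (1 + 1 : Fin ℓ) = 0 := left_eq_add.mp (by rwa [add_assoc] at hxx)
    have hval : ((1 + 1 : Fin ℓ) : ℕ) = 0 := by rw [h0]; rfl
    rw [Fin.val_add, h1, Nat.mod_eq_of_lt (by omega)] at hval
    omega

lemma cycle_edgeSet_ncard (hℓ : 5 ≤ ℓ) (hC : IsCycleSubgraph G ℓ C) :
    C.edgeSet.ncard = ℓ := by
  haveI : NeZero ℓ := ⟨by omega⟩
  obtain ⟨ψ, hinj, hrange, hadj, hcases⟩ := cycle_struct hℓ hC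
  have hg := cycle_g_inj hℓ hinj
  have hE : C.edgeSet = Set.range (fun x : Fin ℓ => s(ψ x, ψ (x + 1))) := by
    ext e
    induction e using Sym2.ind with
    | h u v =>
      constructor
      · intro he
        obtain ⟨x, hx | hx⟩ := hcases u v he
        · exact ⟨x, by show s(ψ x, ψ (x + 1)) = s(u, v); rw [hx.1, hx.2]⟩
        · exact ⟨x, by show s(ψ x, ψ (x + 1)) = s(u, v); rw [hx.1, hx.2, Sym2.eq_swap]⟩
      · rintro ⟨x, hx⟩
        simp only at hx
        rw [← hx]
        exact (hadj x)
  rw [hE, ← Set.image_univ, Set.ncard_image_of_injective _ hg, Set.ncard_univ,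
    Nat.card_eq_fintype_card, Fintype.card_fin]

/-- Key counting lemma: adding an `ℓ`-cycle `C` sharing an edge with `A`, not contained
in `A`, brings strictly more new edges than new vertices, and at most `ℓ - 2` new
vertices. -/
lemma cycle_key [Finite V] (hℓ : 5 ≤ ℓ) (hC : IsCycleSubgraph G ℓ C)
    (hshare : (C.edgeSet ∩ A.edgeSet).Nonempty) (hnle : ¬ C ≤ A) :
    (C.verts \ A.verts).ncard + 1 ≤ (C.edgeSet \ A.edgeSet).ncard ∧
      (C.verts \ A.verts).ncard + 2 ≤ ℓ := by
  haveI : NeZero ℓ := ⟨by omega⟩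
  have h1 : ((1 : Fin ℓ) : ℕ) = 1 := by rw [Fin.val_one']; exact Nat.mod_eq_of_lt (by omega)
  obtain ⟨ψ, hinj, hrange, hadj, hcases⟩ := cycle_struct hℓ hC
  have hg := cycle_g_inj hℓ hinj
  set g : Fin ℓ → Sym2 V := fun x => s(ψ x, ψ (x + 1)) with hgdef
  set S : Set (Fin ℓ) := {x | ψ x ∈ A.verts} with hSdef
  set O : Set (Fin ℓ) := {x | A.Adj (ψ x) (ψ (x + 1))} with hOdef
  have hmem : ∀ x : Fin ℓ, ψ x ∈ C.verts := fun x => hrange ▸ ⟨x, rfl⟩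
  have hOS : ∀ x ∈ O, x ∈ S ∧ x + 1 ∈ S := by
    intro x hx
    exact ⟨A.edge_vert hx, A.edge_vert hx.symm⟩
  -- O is nonempty (shared edge)
  have hOne : O.Nonempty := by
    obtain ⟨e, heC, heA⟩ := hshare
    revert heC heA
    induction e using Sym2.ind with
    | h u v =>
      intro heC heA
      have hCuv : C.Adj u v := heC
      have hAuv : A.Adj u v := heA
      obtain ⟨x, hx | hx⟩ := hcases u v hCuv
      · exact ⟨x, by rw [hOdef]; simp only [Set.mem_setOf_eq, ← hx.1, ← hx.2]; exact hAuv⟩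
      · exact ⟨x, by rw [hOdef]; simp only [Set.mem_setOf_eq, ← hx.1, ← hx.2]; exact hAuv.symm⟩
  -- Oᶜ is nonempty (C not contained in A)
  have hOcne : Oᶜ.Nonempty := by
    by_contra h
    rw [Set.not_nonempty_iff_eq_empty, Set.compl_empty_iff] at h
    apply hnle
    constructor
    · intro v hv
      obtain ⟨x, rfl⟩ := hrange ▸ hv
      exact (hOS x (h.ge (Set.mem_univ x))).1
    · intro u v huv
      obtain ⟨x, hx | hx⟩ := hcases u v huv
      · have : A.Adj (ψ x) (ψ (x + 1)) := h.ge (Set.mem_univ x)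
        rw [hx.1, hx.2]; exact this
      · have : A.Adj (ψ x) (ψ (x + 1)) := h.ge (Set.mem_univ x)
        rw [hx.1, hx.2]; exact this.symm
  -- O is strictly contained in S
  have hOsubS : O ⊆ S := fun x hx => (hOS x hx).1
  have hOneS : O ≠ S := by
    intro h
    have : O = Set.univ := by
      apply fin_succ_closed_eq_univ O hOne
      intro x hx
      have := (hOS x hx).2
      rwa [← h] at this
    rw [this] at hOcne
    simp at hOcne
  have hScOc : Sᶜ ⊂ Oᶜ := by
    constructor
    · exact Set.compl_subset_compl.mpr hOsubS
    · intro hcon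
      exact hOneS (le_antisymm hOsubS (Set.compl_subset_compl.mp hcon))
  -- new vertices = ψ '' Sᶜ
  have hV : C.verts \ A.verts = ψ '' Sᶜ := by
    ext v
    constructor
    · rintro ⟨hvC, hvA⟩
      obtain ⟨x, rfl⟩ := hrange ▸ hvC
      exact ⟨x, hvA, rfl⟩
    · rintro ⟨x, hx, rfl⟩
      exact ⟨hmem x, hx⟩
  -- new edges = g '' Oᶜ
  have hE : C.edgeSet \ A.edgeSet = g '' Oᶜ := by
    ext e
    induction e using Sym2.ind with
    | h u v =>
      constructor
      · rintro ⟨heC, heA⟩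
        have hCuv : C.Adj u v := heC
        obtain ⟨x, hx | hx⟩ := hcases u v hCuv
        · refine ⟨x, fun hxO => heA ?_, by show s(ψ x, ψ (x + 1)) = s(u, v); rw [hx.1, hx.2]⟩
          rw [hx.1, hx.2]; exact hxO
        · refine ⟨x, fun hxO => heA ?_, by show s(ψ x, ψ (x + 1)) = s(u, v); rw [hx.1, hx.2, Sym2.eq_swap]⟩
          rw [hx.1, hx.2]; exact hxO.symm
      · rintro ⟨x, hxO, hx⟩
        rw [← hx]
        exact ⟨hadj x, hxO⟩
  constructor
  · rw [hV, hE, Set.ncard_image_of_injective _ hinj, Set.ncard_image_of_injective _ hg]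
    exact Set.ncard_lt_ncard hScOc (Set.toFinite _)
  · -- at least 2 old vertices
    obtain ⟨x₀, hx₀⟩ := hOne
    have hpair : ({x₀, x₀ + 1} : Set (Fin ℓ)) ⊆ S := by
      intro y hy
      simp only [Set.mem_insert_iff, Set.mem_singleton_iff] at hy
      rcases hy with h | h <;> rw [h]
      exacts [(hOS x₀ hx₀).1, (hOS x₀ hx₀).2]
    have hne : x₀ ≠ x₀ + 1 := by
      intro h
      have h0 : (1 : Fin ℓ) = 0 := (left_eq_add.mp h)
      have : ((1 : Fin ℓ) : ℕ) = 0 := by rw [h0]; simp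
      omega
    have h2S : 2 ≤ S.ncard := by
      have := Set.ncard_le_ncard hpair (Set.toFinite _)
      rwa [Set.ncard_pair hne] at this
    have hcompl : S.ncard + Sᶜ.ncard = ℓ := by
      rw [Set.ncard_add_ncard_compl, Nat.card_eq_fintype_card, Fintype.card_fin]
    rw [hV, Set.ncard_image_of_injective _ hinj]
    omega

end Helpers

/-- In a construction sequence of `ℓ`-cycles in a graph `G` with `m(G) < (ℓ-1)/(ℓ-2)`,
at most one step adds no new vertex (configuration `(A_ℓ)` appears at most once). -/
theorem configuration_A_ell_at_most_once {V : Type*} [Fintype V]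
    (ℓ : ℕ) (hℓ : 5 ≤ ℓ) (G : SimpleGraph V)
    (hG : ∀ J : G.Subgraph, J.verts.Nonempty →
      (ℓ - 2) * J.edgeSet.ncard < (ℓ - 1) * J.verts.ncard)
    (t : ℕ) (H : ℕ → G.Subgraph) (hH : IsConstructionSeq G ℓ t H) :
    {i : ℕ | 1 ≤ i ∧ i < t ∧ (H (i + 1)).verts = (H i).verts}.Subsingleton := by
  obtain ⟨ht1, hC1, hstep⟩ := hH
  -- per-step counting facts
  have step : ∀ k, 1 ≤ k → k < t →
      (H (k + 1)).verts.ncard ≤ (H k).verts.ncard + (ℓ - 2) ∧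
      (H (k + 1)).edgeSet.ncard + (H k).verts.ncard ≥
        (H k).edgeSet.ncard + (H (k + 1)).verts.ncard + 1 := by
    intro k hk1 hkt
    obtain ⟨C, hC, hnle, hshare, hsup⟩ := hstep k hk1 hkt
    obtain ⟨key1, key2⟩ := cycle_key hℓ hC hshare hnle
    have hv : (H (k + 1)).verts.ncard = (H k).verts.ncard + (C.verts \ (H k).verts).ncard := by
      rw [hsup, SimpleGraph.Subgraph.verts_sup, ← Set.union_diff_self,
        Set.ncard_union_eq Set.disjoint_sdiff_right (Set.toFinite _) (Set.toFinite _)]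
    have he : (H (k + 1)).edgeSet.ncard
        = (H k).edgeSet.ncard + (C.edgeSet \ (H k).edgeSet).ncard := by
      rw [hsup, SimpleGraph.Subgraph.edgeSet_sup, ← Set.union_diff_self,
        Set.ncard_union_eq Set.disjoint_sdiff_right (Set.toFinite _) (Set.toFinite _)]
    constructor
    · rw [hv]; omega
    · rw [hv, he]; omega
  have hv1 : (H 1).verts.ncard = ℓ := cycle_verts_ncard hℓ hC1
  have he1 : (H 1).edgeSet.ncard = ℓ := cycle_edgeSet_ncard hℓ hC1
  -- accumulated edge excess
  have claimE : ∀ d, 1 + d ≤ t →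
      (H (1 + d)).edgeSet.ncard ≥ (H (1 + d)).verts.ncard + d := by
    intro d
    induction d with
    | zero => intro _; simp only [Nat.add_zero]; omega
    | succ k ih =>
        intro hkt
        have h1 := ih (by omega)
        have h2 := (step (1 + k) (by omega) (by omega)).2
        have : 1 + (k + 1) = (1 + k) + 1 := by omega
        rw [this]
        omega
  -- accumulated vertex growth
  have claimV : ∀ a d, 1 ≤ a → a + d ≤ t →
      (H (a + d)).verts.ncard ≤ (H a).verts.ncard + d * (ℓ - 2) := by
    intro a d ha
    induction d with
    | zero => intro _; simp only [Nat.add_zero]; omega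
    | succ k ih =>
        intro hkt
        have h1 := ih (by omega)
        have h2 := (step (a + k) (by omega) (by omega)).1
        have : a + (k + 1) = (a + k) + 1 := by omega
        rw [this]
        calc (H ((a + k) + 1)).verts.ncard ≤ (H (a + k)).verts.ncard + (ℓ - 2) := h2
      _ ≤ (H a).verts.ncard + k * (ℓ - 2) + (ℓ - 2) := by omega
      _ = (H a).verts.ncard + (k + 1) * (ℓ - 2) := by ring
  -- vertex monotonicity for nonemptiness
  have claimN : ∀ d, 1 + d ≤ t → (H 1).verts ⊆ (H (1 + d)).verts := by
    intro d
    induction d with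
    | zero => intro _; exact subset_rfl
    | succ k ih =>
        intro hkt
        obtain ⟨C, -, -, -, hsup⟩ := hstep (1 + k) (by omega) (by omega)
        have : 1 + (k + 1) = (1 + k) + 1 := by omega
        rw [this, hsup, SimpleGraph.Subgraph.verts_sup]
        exact (ih (by omega)).trans Set.subset_union_left
  -- no two A-steps
  have no_two : ∀ i j, 1 ≤ i → i < j → j < t →
      (H (i + 1)).verts = (H i).verts → (H (j + 1)).verts = (H j).verts → False := by
    intro i j hi hij hjt hAi hAj
    -- bound on v_{j+1}
    have hvi : (H i).verts.ncard ≤ ℓ + (i - 1) * (ℓ - 2) := by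
      have := claimV 1 (i - 1) (le_refl 1) (by omega)
      rw [show 1 + (i - 1) = i by omega] at this
      omega
    have hvj : (H j).verts.ncard ≤ (H (i + 1)).verts.ncard + (j - i - 1) * (ℓ - 2) := by
      have := claimV (i + 1) (j - i - 1) (by omega) (by omega)
      rw [show (i + 1) + (j - i - 1) = j by omega] at this
      exact this
    have hvbound : (H (j + 1)).verts.ncard ≤ ℓ + (i - 1) * (ℓ - 2) + (j - i - 1) * (ℓ - 2) := by
      rw [hAj]
      calc (H j).verts.ncard ≤ (H (i + 1)).verts.ncard + (j - i - 1) * (ℓ - 2) := hvj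
        _ = (H i).verts.ncard + (j - i - 1) * (ℓ - 2) := by rw [hAi]
        _ ≤ ℓ + (i - 1) * (ℓ - 2) + (j - i - 1) * (ℓ - 2) := by omega
    -- edge excess at j+1
    have hE : (H (j + 1)).edgeSet.ncard ≥ (H (j + 1)).verts.ncard + j := by
      have := claimE j (by omega)
      rwa [show 1 + j = j + 1 by omega] at this
    -- density
    have hne : (H (j + 1)).verts.Nonempty := by
      have hsub := claimN j (by omega)
      rw [show 1 + j = j + 1 by omega] at hsub
      obtain ⟨v, hv⟩ := Set.nonempty_of_ncard_ne_zero (s := (H 1).verts) (by omega)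
      exact ⟨v, hsub hv⟩
    have hdens := hG (H (j + 1)) hne
    -- derive contradiction
    set v := (H (j + 1)).verts.ncard
    set e := (H (j + 1)).edgeSet.ncard
    set L := ℓ - 2 with hL
    have hL1 : ℓ - 1 = L + 1 := by omega
    rw [hL1] at hdens
    -- L * (v + j) ≤ L * e < (L+1) * v  ⇒  L * j < v
    have h3 : L * (v + j) ≤ L * e := Nat.mul_le_mul_left L (by omega)
    have h4 : L * j < v := by nlinarith
    -- v ≤ ℓ + (i-1)*L + (j-i-1)*L and (i-1) + (j-i-1) = j - 2
    have h5 : (i - 1) * L + (j - i - 1) * L = (j - 2) * L := by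
      rw [← Nat.add_mul]
      congr 1
      omega
    have h6 : L * j = (j - 2) * L + 2 * L := by
      have : j = (j - 2) + 2 := by omega
      calc L * j = L * ((j - 2) + 2) := by rw [← this]
        _ = (j - 2) * L + 2 * L := by ring
    omega
  intro a ha b hb
  simp only [Set.mem_setOf_eq] at ha hb
  by_contra hab
  rcases Nat.lt_or_ge a b with h | h
  · exact no_two a b ha.1 h hb.2.1 ha.2.2 hb.2.2
  · have : b < a := by omega
    exact no_two b a hb.1 this ha.2.1 hb.2.2 ha.2.2
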